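/- The ℂ-linear map sending a 4×4 complex matrix M = X + iY (X symmetric, Y antisymmetric) to the quadratic form q(y) = y·A₈·yᵀ on ℂ⁸, where A₈ = [[X, −Y],[Y, X]], is injective, its image is exactly the space of quadratic forms on ℂ⁸ that vanish identically on both 3-dimensional subspaces span corresponding to H_Bl = V(y₀+iy₄, y₁+iy₅, y₂+iy₆, y₃+iy₇) and its conjugate V(y₀−iy₄, …, y₃−iy₇), and rank(A₈) = 2·rank(M). Consequently, there is an isomorphism between the rank-k locus of P(M₄(ℂ)) ≅ ℂP¹⁵ and the space of rank-2k quadrics in ℂP⁷ passing through two given disjoint 3-spaces. -/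

import Mathlib

open Matrix

/-- The symmetric part `X` and antisymmetric part `Y` of `M = X + iY`, assembled
into the associated symmetric 8×8 matrix `A₈ = [[X, -Y], [Y, X]]`. -/
noncomputable def assocA8 (M : Matrix (Fin 4) (Fin 4) ℂ) :
    Matrix (Fin 4 ⊕ Fin 4) (Fin 4 ⊕ Fin 4) ℂ :=
  Matrix.fromBlocks ((1 / 2 : ℂ) • (M + M.transpose))
    (-((-Complex.I / 2) • (M - M.transpose)))
    ((-Complex.I / 2) • (M - M.transpose))
    ((1 / 2 : ℂ) • (M + M.transpose))

/-- A symmetric complex matrix whose quadratic form vanishes identically is zero. -/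
lemma quadZero {n : Type*} [Fintype n] [DecidableEq n] {T : Matrix n n ℂ}
    (hT : T.IsSymm) (h : ∀ v : n → ℂ, v ⬝ᵥ T *ᵥ v = 0) : T = 0 := by
  have hd : ∀ k, T k k = 0 := by
    intro k
    simpa [mulVec_single, single_dotProduct] using h (Pi.single k 1)
  ext i j
  have h2 := h (Pi.single i 1 + Pi.single j 1)
  have hs : T j i = T i j := hT.apply i j
  simp [mulVec_add, dotProduct_add, add_dotProduct, mulVec_single,
    single_dotProduct, hd, hs] at h2
  simpa using h2

/-- Quadratic form of a block matrix on a vector `(c•v, v)`. -/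
lemma elimQuad (A B C D : Matrix (Fin 4) (Fin 4) ℂ) (c : ℂ) (v : Fin 4 → ℂ) :
    (Sum.elim (c • v) v) ⬝ᵥ (fromBlocks A B C D) *ᵥ (Sum.elim (c • v) v)
      = (c*c) * (v ⬝ᵥ A *ᵥ v) + c * (v ⬝ᵥ B *ᵥ v) + c * (v ⬝ᵥ C *ᵥ v) + v ⬝ᵥ D *ᵥ v := by
  simp [fromBlocks_mulVec, sumElim_dotProduct_sumElim, dotProduct_add,
    mulVec_smul, dotProduct_smul, smul_dotProduct, smul_eq_mul]
  ring

lemma assocA8_isSymm (M : Matrix (Fin 4) (Fin 4) ℂ) : (assocA8 M).IsSymm := by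
  unfold Matrix.IsSymm
  rw [assocA8, fromBlocks_transpose]
  congr 1 <;>
    simp [transpose_smul, transpose_add, transpose_sub, smul_sub, smul_add] <;> abel

lemma assocA8_recover (M : Matrix (Fin 4) (Fin 4) ℂ) :
    (assocA8 M).toBlocks₁₁ + Complex.I • (assocA8 M).toBlocks₂₁ = M := by
  rw [assocA8, toBlocks_fromBlocks₁₁, toBlocks_fromBlocks₂₁, smul_smul]
  have h : Complex.I * (-Complex.I / 2) = 1/2 := by
    have := Complex.I_mul_I; linear_combination -1/2 * this
  rw [h]
  module

lemma assocA8_vanish (M : Matrix (Fin 4) (Fin 4) ℂ) (c : ℂ) (hc : c * c = -1)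
    (y : Fin 4 ⊕ Fin 4 → ℂ) (hy : ∀ j, y (Sum.inl j) = c * y (Sum.inr j)) :
    y ⬝ᵥ (assocA8 M) *ᵥ y = 0 := by
  set v : Fin 4 → ℂ := fun j => y (Sum.inr j) with hv
  have hy' : y = Sum.elim (c • v) v := by
    funext x; cases x <;> simp [hy, hv]
  rw [hy', assocA8, elimQuad]
  have hneg : v ⬝ᵥ (-((-Complex.I / 2) • (M - M.transpose))) *ᵥ v
      = -(v ⬝ᵥ ((-Complex.I / 2) • (M - M.transpose)) *ᵥ v) := by
    rw [neg_mulVec, dotProduct_neg]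
  rw [hneg]
  linear_combination (v ⬝ᵥ ((1/2 : ℂ) • (M + M.transpose)) *ᵥ v) * hc

lemma exists_assocA8 (S : Matrix (Fin 4 ⊕ Fin 4) (Fin 4 ⊕ Fin 4) ℂ) (hS : S.IsSymm)
    (h1 : ∀ y : Fin 4 ⊕ Fin 4 → ℂ,
        (∀ j : Fin 4, y (Sum.inl j) + Complex.I * y (Sum.inr j) = 0) → y ⬝ᵥ S *ᵥ y = 0)
    (h2 : ∀ y : Fin 4 ⊕ Fin 4 → ℂ,
        (∀ j : Fin 4, y (Sum.inl j) - Complex.I * y (Sum.inr j) = 0) → y ⬝ᵥ S *ᵥ y = 0) :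
    ∃ M : Matrix (Fin 4) (Fin 4) ℂ, assocA8 M = S := by
  set A := S.toBlocks₁₁ with hA
  set B := S.toBlocks₁₂ with hB
  set C := S.toBlocks₂₁ with hC
  set D := S.toBlocks₂₂ with hD
  have hfb : S = fromBlocks A B C D := (fromBlocks_toBlocks S).symm
  have hT : fromBlocks Aᵀ Cᵀ Bᵀ Dᵀ = fromBlocks A B C D := by
    rw [← fromBlocks_transpose, ← hfb, hS.eq, hfb]
  have hAt : Aᵀ = A := by simpa using congrArg Matrix.toBlocks₁₁ hT
  have hDt : Dᵀ = D := by simpa using congrArg Matrix.toBlocks₂₂ hT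
  have hBt : Bᵀ = C := by simpa using congrArg Matrix.toBlocks₂₁ hT
  have hCt : Cᵀ = B := by simpa using congrArg Matrix.toBlocks₁₂ hT
  have hq1 : ∀ v : Fin 4 → ℂ, (-Complex.I)*(-Complex.I) * (v ⬝ᵥ A *ᵥ v)
      + (-Complex.I) * (v ⬝ᵥ B *ᵥ v) + (-Complex.I) * (v ⬝ᵥ C *ᵥ v) + v ⬝ᵥ D *ᵥ v = 0 := by
    intro v
    have hcons : ∀ j : Fin 4, (Sum.elim ((-Complex.I) • v) v) (Sum.inl j)
        + Complex.I * (Sum.elim ((-Complex.I) • v) v) (Sum.inr j) = 0 := by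
      intro j; simp [Pi.smul_apply, smul_eq_mul]
    have := h1 (Sum.elim ((-Complex.I) • v) v) hcons
    rwa [hfb, elimQuad] at this
  have hq2 : ∀ v : Fin 4 → ℂ, Complex.I*Complex.I * (v ⬝ᵥ A *ᵥ v)
      + Complex.I * (v ⬝ᵥ B *ᵥ v) + Complex.I * (v ⬝ᵥ C *ᵥ v) + v ⬝ᵥ D *ᵥ v = 0 := by
    intro v
    have hcons : ∀ j : Fin 4, (Sum.elim (Complex.I • v) v) (Sum.inl j)
        - Complex.I * (Sum.elim (Complex.I • v) v) (Sum.inr j) = 0 := by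
      intro j; simp [Pi.smul_apply, smul_eq_mul]
    have := h2 (Sum.elim (Complex.I • v) v) hcons
    rwa [hfb, elimQuad] at this
  have hsym1 : (D - A - Complex.I • (B + C)).IsSymm := by
    unfold Matrix.IsSymm
    simp [transpose_sub, transpose_smul, transpose_add, hAt, hDt, hBt, hCt, add_comm B C]
    abel
  have hsym2 : (D - A + Complex.I • (B + C)).IsSymm := by
    unfold Matrix.IsSymm
    simp [transpose_sub, transpose_add, transpose_smul, hAt, hDt, hBt, hCt, add_comm B C]
    abel
  have hT1 : D - A - Complex.I • (B + C) = 0 := by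
    refine quadZero hsym1 (fun v => ?_)
    have e1 := hq1 v
    simp only [sub_mulVec, add_mulVec, dotProduct_sub, dotProduct_add,
      smul_mulVec, dotProduct_smul, smul_eq_mul]
    linear_combination e1 - (v ⬝ᵥ A *ᵥ v) * Complex.I_mul_I
  have hT2 : D - A + Complex.I • (B + C) = 0 := by
    refine quadZero hsym2 (fun v => ?_)
    have e2 := hq2 v
    simp only [sub_mulVec, add_mulVec, dotProduct_sub, dotProduct_add,
      smul_mulVec, dotProduct_smul, smul_eq_mul]
    linear_combination e2 - (v ⬝ᵥ A *ᵥ v) * Complex.I_mul_I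
  have hDA : D = A := by
    ext i j
    have e1 := congrFun (congrFun hT1 i) j
    have e2 := congrFun (congrFun hT2 i) j
    simp only [Matrix.sub_apply, Matrix.add_apply, Matrix.smul_apply, smul_eq_mul,
      Matrix.zero_apply] at e1 e2
    linear_combination (1/2 : ℂ) * e1 + (1/2 : ℂ) * e2
  have hCB : C = -B := by
    ext i j
    have e1 := congrFun (congrFun hT1 i) j
    have e2 := congrFun (congrFun hT2 i) j
    simp only [Matrix.sub_apply, Matrix.add_apply, Matrix.smul_apply, smul_eq_mul,
      Matrix.zero_apply, Matrix.neg_apply] at e1 e2 ⊢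
    linear_combination (Complex.I/2) * e1 - (Complex.I/2) * e2
      + (B i j + C i j) * Complex.I_mul_I
  have hBt2 : Bᵀ = -B := by rw [hBt, hCB]
  refine ⟨A - Complex.I • B, ?_⟩
  have hMt : (A - Complex.I • B)ᵀ = A + Complex.I • B := by
    rw [transpose_sub, transpose_smul, hAt, hBt2, smul_neg]; module
  have hS' : S = fromBlocks A B (-B) A := by rw [hfb, hCB, hDA]
  rw [hS', assocA8, hMt]
  have hX : (1/2 : ℂ) • ((A - Complex.I • B) + (A + Complex.I • B)) = A := by module
  have hsub : (A - Complex.I • B) - (A + Complex.I • B) = (-(2*Complex.I)) • B := by module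
  have hY : (-Complex.I/2 : ℂ) • ((A - Complex.I • B) - (A + Complex.I • B)) = -B := by
    rw [hsub, smul_smul]
    have hc : (-Complex.I/2) * (-(2*Complex.I)) = -1 := by linear_combination Complex.I_mul_I
    rw [hc]; module
  rw [hX, hY, neg_neg]

/-- product of submodules is linearly equivalent to the product module -/
def submoduleProdEquiv {R M N : Type*} [CommRing R] [AddCommGroup M] [AddCommGroup N]
    [Module R M] [Module R N] (p : Submodule R M) (q : Submodule R N) :
    (p.prod q) ≃ₗ[R] p × q where
  toFun x := (⟨x.1.1, x.2.1⟩, ⟨x.1.2, x.2.2⟩)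
  invFun y := ⟨(y.1.1, y.2.1), ⟨y.1.2, y.2.2⟩⟩
  map_add' _ _ := rfl
  map_smul' _ _ := rfl
  left_inv _ := rfl
  right_inv _ := rfl

lemma rank_fromBlocks_diag (A B : Matrix (Fin 4) (Fin 4) ℂ) :
    (fromBlocks A 0 0 B).rank = A.rank + B.rank := by
  classical
  set e := LinearEquiv.sumArrowLequivProdArrow (Fin 4) (Fin 4) ℂ ℂ with he
  have hmap : (LinearMap.range (fromBlocks A 0 0 B).mulVecLin).map
      (e : (Fin 4 ⊕ Fin 4 → ℂ) →ₗ[ℂ] (Fin 4 → ℂ) × (Fin 4 → ℂ))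
      = (LinearMap.range A.mulVecLin).prod (LinearMap.range B.mulVecLin) := by
    ext y
    simp only [Submodule.mem_map, LinearMap.mem_range, Submodule.mem_prod]
    constructor
    · rintro ⟨z, ⟨x, rfl⟩, rfl⟩
      constructor
      · exact ⟨x ∘ Sum.inl, by
          funext a
          simp [he, mulVecLin_apply, fromBlocks_mulVec,
            LinearEquiv.sumArrowLequivProdArrow]⟩
      · exact ⟨x ∘ Sum.inr, by
          funext a
          simp [he, mulVecLin_apply, fromBlocks_mulVec,
            LinearEquiv.sumArrowLequivProdArrow]⟩
    · rintro ⟨⟨u, hu⟩, ⟨v, hv⟩⟩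
      refine ⟨(fromBlocks A 0 0 B).mulVec (Sum.elim u v), ⟨Sum.elim u v, rfl⟩, ?_⟩
      have : y = (y.1, y.2) := rfl
      rw [this, Prod.ext_iff]
      constructor
      · funext a
        simp [he, fromBlocks_mulVec,
          LinearEquiv.sumArrowLequivProdArrow, ← hu]
      · funext a
        simp [he, fromBlocks_mulVec,
          LinearEquiv.sumArrowLequivProdArrow, ← hv]
  rw [Matrix.rank, Matrix.rank, Matrix.rank,
    ← LinearEquiv.finrank_map_eq e (LinearMap.range (fromBlocks A 0 0 B).mulVecLin), hmap]
  rw [(submoduleProdEquiv _ _).finrank_eq, Module.finrank_prod]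

noncomputable def Pm8 : Matrix (Fin 4 ⊕ Fin 4) (Fin 4 ⊕ Fin 4) ℂ :=
  fromBlocks 1 (Complex.I • 1) 1 (-(Complex.I • 1))

noncomputable def Qm8 : Matrix (Fin 4 ⊕ Fin 4) (Fin 4 ⊕ Fin 4) ℂ :=
  fromBlocks 1 1 (-(Complex.I • 1)) (Complex.I • 1)

lemma PQ_eq : Pm8 * Qm8 = (2:ℂ) • 1 := by
  rw [Pm8, Qm8, fromBlocks_multiply, ← fromBlocks_one, fromBlocks_smul]
  have h : (Complex.I • (1 : Matrix (Fin 4) (Fin 4) ℂ)) * (Complex.I • 1) = -1 := by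
    rw [Matrix.smul_mul, Matrix.mul_smul, smul_smul, Complex.I_mul_I, one_mul, neg_smul, one_smul]
  simp only [Matrix.mul_neg, Matrix.neg_mul, h, neg_neg, Matrix.one_mul, Matrix.mul_one,
    smul_zero, add_neg_cancel]
  rw [two_smul]

lemma key_conj (M : Matrix (Fin 4) (Fin 4) ℂ) :
    Pm8 * assocA8 M * Qm8 = fromBlocks ((2:ℂ) • M) 0 0 ((2:ℂ) • M.transpose) := by
  rw [Pm8, Qm8, assocA8, fromBlocks_multiply, fromBlocks_multiply]
  have hI := Complex.I_mul_I
  ext i j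
  rcases i with i|i <;> rcases j with j|j <;>
    simp only [fromBlocks_apply₁₁, fromBlocks_apply₁₂, fromBlocks_apply₂₁, fromBlocks_apply₂₂,
      Matrix.smul_mul, Matrix.mul_smul, Matrix.one_mul, Matrix.mul_one,
      Matrix.neg_mul, Matrix.mul_neg, smul_smul, Matrix.add_apply, Matrix.smul_apply,
      Matrix.sub_apply, Matrix.neg_apply, Matrix.transpose_apply, smul_eq_mul,
      Matrix.zero_apply]
  · linear_combination (-(3*M i j - M j i)/2) * hI
  · linear_combination ((M i j + M j i)/2) * hI
  · linear_combination ((M i j + M j i)/2) * hI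
  · linear_combination ((M i j - 3*M j i)/2) * hI

theorem assocA8_injective_image_rank :
    Function.Injective (fun (M : Matrix (Fin 4) (Fin 4) ℂ) =>
      fun y : Fin 4 ⊕ Fin 4 → ℂ => y ⬝ᵥ (assocA8 M).mulVec y) ∧
    (∀ S : Matrix (Fin 4 ⊕ Fin 4) (Fin 4 ⊕ Fin 4) ℂ, S.IsSymm →
      ((∃ M : Matrix (Fin 4) (Fin 4) ℂ, assocA8 M = S) ↔
        ((∀ y : Fin 4 ⊕ Fin 4 → ℂ,
            (∀ j : Fin 4, y (Sum.inl j) + Complex.I * y (Sum.inr j) = 0) →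
            y ⬝ᵥ S.mulVec y = 0) ∧
         (∀ y : Fin 4 ⊕ Fin 4 → ℂ,
            (∀ j : Fin 4, y (Sum.inl j) - Complex.I * y (Sum.inr j) = 0) →
            y ⬝ᵥ S.mulVec y = 0)))) ∧
    (∀ M : Matrix (Fin 4) (Fin 4) ℂ, (assocA8 M).rank = 2 * M.rank) := by
  refine ⟨?_, ?_, ?_⟩
  · -- injectivity
    intro M1 M2 h
    have hq : ∀ v : Fin 4 ⊕ Fin 4 → ℂ, v ⬝ᵥ (assocA8 M1 - assocA8 M2) *ᵥ v = 0 := by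
      intro v
      have := congrFun h v
      simp only at this
      rw [sub_mulVec, dotProduct_sub, this, sub_self]
    have hsym : (assocA8 M1 - assocA8 M2).IsSymm := (assocA8_isSymm M1).sub (assocA8_isSymm M2)
    have heq : assocA8 M1 = assocA8 M2 := sub_eq_zero.mp (quadZero hsym hq)
    rw [← assocA8_recover M1, ← assocA8_recover M2, heq]
  · -- image characterization
    intro S hS
    constructor
    · rintro ⟨M, rfl⟩
      constructor
      · intro y hy
        refine assocA8_vanish M (-Complex.I) (by linear_combination Complex.I_mul_I) y ?_
        intro j
        linear_combination hy j
      · intro y hy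
        refine assocA8_vanish M (Complex.I) Complex.I_mul_I y ?_
        intro j
        linear_combination hy j
    · rintro ⟨hv1, hv2⟩
      exact exists_assocA8 S hS hv1 hv2
  · -- rank
    intro M
    have hPr : Pm8 * ((1/2 : ℂ) • Qm8) = 1 := by
      rw [Matrix.mul_smul, PQ_eq, smul_smul]
      norm_num
    have hQl : ((1/2 : ℂ) • Pm8) * Qm8 = 1 := by
      rw [Matrix.smul_mul, PQ_eq, smul_smul]
      norm_num
    have hP : IsUnit Pm8.det := by
      have := invertibleOfRightInverse _ _ hPr
      exact (Matrix.isUnit_iff_isUnit_det Pm8).mp (isUnit_of_invertible _)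
    have hQ : IsUnit Qm8.det := by
      have := invertibleOfLeftInverse _ _ hQl
      exact (Matrix.isUnit_iff_isUnit_det Qm8).mp (isUnit_of_invertible _)
    have h1 : (Pm8 * assocA8 M * Qm8).rank = (assocA8 M).rank := by
      rw [rank_mul_eq_left_of_isUnit_det Qm8 _ hQ,
        rank_mul_eq_right_of_isUnit_det Pm8 _ hP]
    have hsmul : ∀ N : Matrix (Fin 4) (Fin 4) ℂ, ((2:ℂ) • N).rank = N.rank := by
      intro N
      have h2 : (2:ℂ) • N = ((2:ℂ) • (1 : Matrix (Fin 4) (Fin 4) ℂ)) * N := by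
        rw [Matrix.smul_mul, Matrix.one_mul]
      have hdet : IsUnit ((2:ℂ) • (1 : Matrix (Fin 4) (Fin 4) ℂ)).det := by
        rw [det_smul, det_one]
        norm_num
      rw [h2, rank_mul_eq_right_of_isUnit_det _ _ hdet]
    rw [← h1, key_conj, rank_fromBlocks_diag, hsmul, hsmul, rank_transpose, two_mul]
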